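/- Let π = D_{2n} be the dihedral group of order 2n with presentation ⟨x, y | xⁿy⁻², xyxy⁻¹, y²⟩, and let d₂ : ℤπ³ → ℤπ² be right multiplication by the matrix with rows (N_x, −(1+y)), (1+xy, x−1), (0, y+1). Then there is a short exact sequence of ℤπ-modules 0 → ℤπ/N → ker(d₂) → (I,2) → 0, where the first map sends 1 to (x−1, 1−xy, 0) and the second map sends (a,b,c) to c. -/

import Mathlib

open TensorProduct

section SubQuot
variable {G : Type*} [Group G] {V : Type*} [AddCommGroup V] [Module ℤ V]

/-- The restriction of a representation to an invariant submodule. -/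
def subRep (ρ : Representation ℤ G V) (p : Submodule ℤ V)
    (hp : ∀ g : G, ∀ x ∈ p, ρ g x ∈ p) : Representation ℤ G p where
  toFun g := (ρ g).restrict (hp g)
  map_one' := by
    ext x
    simp [LinearMap.restrict_apply]
  map_mul' g h := by
    ext x
    simp [LinearMap.restrict_apply, map_mul]

/-- The representation induced on the quotient by an invariant submodule. -/
noncomputable def quotRep (ρ : Representation ℤ G V) (p : Submodule ℤ V)
    (hp : ∀ g : G, ∀ x ∈ p, ρ g x ∈ p) : Representation ℤ G (V ⧸ p) where
  toFun g := Submodule.mapQ p p (ρ g) (hp g)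
  map_one' := by
    apply LinearMap.ext
    intro x
    obtain ⟨v, rfl⟩ := Submodule.Quotient.mk_surjective p x
    simp [Submodule.mapQ_apply]
  map_mul' g h := by
    apply LinearMap.ext
    intro x
    obtain ⟨v, rfl⟩ := Submodule.Quotient.mk_surjective p x
    simp [Submodule.mapQ_apply, map_mul]

end SubQuot

section GroupRing
variable (G : Type*) [Group G]

/-- The left regular representation of `G` on the group ring `ℤG`. -/
noncomputable def regRep : Representation ℤ G (MonoidAlgebra ℤ G) where
  toFun g := LinearMap.mulLeft ℤ (MonoidAlgebra.of ℤ G g)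
  map_one' := by
    apply LinearMap.ext; intro x
    simp [MonoidAlgebra.of_apply, ← MonoidAlgebra.one_def]
  map_mul' g h := by
    apply LinearMap.ext; intro x
    simp only [MonoidAlgebra.of_apply, LinearMap.mulLeft_apply, Module.End.mul_apply]
    rw [← mul_assoc, MonoidAlgebra.single_mul_single, mul_one]

/-- The augmentation map `ε : ℤG → ℤ`. -/
noncomputable def aug : MonoidAlgebra ℤ G →ₐ[ℤ] ℤ := MonoidAlgebra.lift ℤ ℤ G 1

/-- The augmentation ideal `I = ker(ε : ℤG → ℤ)`. -/
noncomputable def augI : Ideal (MonoidAlgebra ℤ G) := RingHom.ker (aug G).toRingHom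

/-- The mod 2 augmentation map `ℤG → ℤ/2`. -/
noncomputable def aug2 : MonoidAlgebra ℤ G →+* ZMod 2 :=
  (Int.castRingHom (ZMod 2)).comp (aug G).toRingHom

/-- The ideal `(I, 2) = ker(ℤG → ℤ/2)` generated by the augmentation ideal and `2`. -/
noncomputable def I2 : Ideal (MonoidAlgebra ℤ G) := RingHom.ker (aug2 G)

/-- The norm element `N = ∑_{g ∈ G} g ∈ ℤG`. -/
noncomputable def Nelt [Fintype G] : MonoidAlgebra ℤ G := ∑ g : G, MonoidAlgebra.of ℤ G g

/-- The (left) ideal of `ℤG` generated by the norm element `N`; the quotient by it is `ℤG/N`. -/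
noncomputable def NIdeal [Fintype G] : Ideal (MonoidAlgebra ℤ G) := Ideal.span {Nelt G}

/-- The left ideal `(N, 2)` of `ℤG` generated by the norm element `N` and `2`. -/
noncomputable def N2 [Fintype G] : Ideal (MonoidAlgebra ℤ G) := Ideal.span {Nelt G, 2}

lemma aug_single (g : G) : aug G (MonoidAlgebra.single g 1) = 1 := by
  simp [aug, MonoidAlgebra.lift_single]

lemma of_sub_one_mem_augI (g : G) :
    MonoidAlgebra.of ℤ G g - 1 ∈ (augI G).restrictScalars ℤ := by
  simp [augI, RingHom.mem_ker, map_sub, aug_single]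

lemma of_sub_one_mem_I2 (g : G) :
    MonoidAlgebra.of ℤ G g - 1 ∈ (I2 G).restrictScalars ℤ := by
  simp [I2, aug2, RingHom.mem_ker, map_sub, aug_single]

lemma two_mem_I2 : (2 : MonoidAlgebra ℤ G) ∈ (I2 G).restrictScalars ℤ := by
  have : (aug2 G) 2 = 2 := by simp [map_ofNat]
  simp [I2, RingHom.mem_ker, this]
  decide

lemma N_mem_I2 [Fintype G] (h : Even (Fintype.card G)) :
    Nelt G ∈ (I2 G).restrictScalars ℤ := by
  have : (aug2 G) (Nelt G) = (Fintype.card G : ZMod 2) := by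
    simp [Nelt, map_sum, aug2, aug_single]
  simp only [Submodule.restrictScalars_mem, I2, RingHom.mem_ker, this]
  rw [ZMod.natCast_eq_zero_iff]
  exact h.two_dvd

lemma N_mem_N2 [Fintype G] : Nelt G ∈ (N2 G).restrictScalars ℤ :=
  Ideal.subset_span (by simp)

lemma two_mem_N2 [Fintype G] : (2 : MonoidAlgebra ℤ G) ∈ (N2 G).restrictScalars ℤ :=
  Ideal.subset_span (by simp)

lemma ideal_invariant (J : Ideal (MonoidAlgebra ℤ G)) :
    ∀ g : G, ∀ x ∈ J.restrictScalars ℤ, (regRep G) g x ∈ J.restrictScalars ℤ := by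
  intro g x hx
  exact J.mul_mem_left _ hx

/-- A (left) ideal of `ℤG`, regarded as a representation of `G`. -/
noncomputable def idealRep (J : Ideal (MonoidAlgebra ℤ G)) :
    Representation ℤ G ↥(J.restrictScalars ℤ) :=
  subRep (regRep G) (J.restrictScalars ℤ) (ideal_invariant G J)

/-- The quotient `ℤG/N` of `ℤG` by the ideal generated by the norm element, as a
representation of `G`. -/
noncomputable def quotNRep [Fintype G] :
    Representation ℤ G (MonoidAlgebra ℤ G ⧸ (NIdeal G).restrictScalars ℤ) :=
  quotRep (regRep G) ((NIdeal G).restrictScalars ℤ) (ideal_invariant G (NIdeal G))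

/-- `2` as an element of `(I,2)`. -/
noncomputable def twoI2 : ↥((I2 G).restrictScalars ℤ) := ⟨2, two_mem_I2 G⟩

/-- `g - 1` as an element of `(I,2)`. -/
noncomputable def gm1 (g : G) : ↥((I2 G).restrictScalars ℤ) :=
  ⟨MonoidAlgebra.of ℤ G g - 1, of_sub_one_mem_I2 G g⟩

/-- `g - 1` as an element of the augmentation ideal `I`. -/
noncomputable def gm1I (g : G) : ↥((augI G).restrictScalars ℤ) :=
  ⟨MonoidAlgebra.of ℤ G g - 1, of_sub_one_mem_augI G g⟩

/-- The norm element as an element of `(I,2)` (for `G` of even order). -/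
noncomputable def NeltI2 [Fintype G] (h : Even (Fintype.card G)) :
    ↥((I2 G).restrictScalars ℤ) := ⟨Nelt G, N_mem_I2 G h⟩

/-- The norm element as an element of `(N,2)`. -/
noncomputable def NeltN2 [Fintype G] : ↥((N2 G).restrictScalars ℤ) := ⟨Nelt G, N_mem_N2 G⟩

end GroupRing

section Dihedral

/-- The element `x = r 1` (rotation) of the dihedral group, in the group ring `ℤ[D_{2n}]`. -/
noncomputable def XD (n : ℕ) : MonoidAlgebra ℤ (DihedralGroup n) :=
  MonoidAlgebra.of ℤ (DihedralGroup n) (DihedralGroup.r 1)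

/-- The element `y = sr 0` (reflection) of the dihedral group, in the group ring `ℤ[D_{2n}]`. -/
noncomputable def YD (n : ℕ) : MonoidAlgebra ℤ (DihedralGroup n) :=
  MonoidAlgebra.of ℤ (DihedralGroup n) (DihedralGroup.sr 0)

/-- The element `N_x = 1 + x + ⋯ + x^{n-1}` of `ℤ[D_{2n}]`. -/
noncomputable def NxD (n : ℕ) : MonoidAlgebra ℤ (DihedralGroup n) :=
  ∑ i ∈ Finset.range n, XD n ^ i

end Dihedral

section Aux
open DihedralGroup MonoidAlgebra

variable (n : ℕ) [NeZero n]

/-- sum of `single (r i) 1` over all rotations. -/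
noncomputable def Mrot : MonoidAlgebra ℤ (DihedralGroup n) :=
  ∑ i : ZMod n, MonoidAlgebra.single (r i) (1 : ℤ)

/-- sum of `single (sr i) 1` over all reflections. -/
noncomputable def Mref : MonoidAlgebra ℤ (DihedralGroup n) :=
  ∑ i : ZMod n, MonoidAlgebra.single (sr i) (1 : ℤ)

variable {n}
set_option linter.unusedSectionVars false

lemma sum_range_zmod {M : Type*} [AddCommMonoid M] (f : ZMod n → M) :
    ∑ j ∈ Finset.range n, f (j : ZMod n) = ∑ i : ZMod n, f i := by
  refine Finset.sum_nbij' (fun k => (k : ZMod n)) (fun i => i.val)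
    (fun a _ => Finset.mem_univ _) (fun i _ => Finset.mem_range.mpr i.val_lt)
    (fun a ha => ZMod.val_cast_of_lt (Finset.mem_range.mp ha))
    (fun i _ => ZMod.natCast_rightInverse i) (fun a _ => rfl)

lemma XD_eq : XD n = MonoidAlgebra.single (r 1) (1 : ℤ) := rfl
lemma YD_eq : YD n = MonoidAlgebra.single (sr 0) (1 : ℤ) := rfl

lemma xy_eq : XD n * YD n = MonoidAlgebra.single (sr (-1)) (1 : ℤ) := by
  rw [XD_eq, YD_eq, MonoidAlgebra.single_mul_single]
  simp [zero_sub]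

lemma NxD_eq : NxD n = Mrot n := by
  rw [NxD, Mrot, ← sum_range_zmod (fun i => MonoidAlgebra.single (r i) (1:ℤ))]
  refine Finset.sum_congr rfl fun k _ => ?_
  rw [XD_eq, ← MonoidAlgebra.of_apply, ← map_pow, r_one_pow, MonoidAlgebra.of_apply]

lemma Mrot_apply_r (j : ZMod n) : (Mrot n).coeff (r j) = 1 := by
  rw [Mrot, MonoidAlgebra.coeff_sum, Finsupp.finset_sum_apply]
  rw [Finset.sum_eq_single j]
  · simp [MonoidAlgebra.coeff_single, Finsupp.single_apply]
  · intro b _ hb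
    simp [MonoidAlgebra.coeff_single, Finsupp.single_apply, hb]
  · simp

lemma Mrot_apply_sr (j : ZMod n) : (Mrot n).coeff (sr j) = 0 := by
  rw [Mrot, MonoidAlgebra.coeff_sum, Finsupp.finset_sum_apply]
  refine Finset.sum_eq_zero fun b _ => ?_
  simp [MonoidAlgebra.coeff_single, Finsupp.single_apply]

lemma Mref_apply_r (j : ZMod n) : (Mref n).coeff (r j) = 0 := by
  rw [Mref, MonoidAlgebra.coeff_sum, Finsupp.finset_sum_apply]
  refine Finset.sum_eq_zero fun b _ => ?_
  simp [MonoidAlgebra.coeff_single, Finsupp.single_apply]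

lemma Mref_apply_sr (j : ZMod n) : (Mref n).coeff (sr j) = 1 := by
  rw [Mref, MonoidAlgebra.coeff_sum, Finsupp.finset_sum_apply]
  rw [Finset.sum_eq_single j]
  · simp [MonoidAlgebra.coeff_single, Finsupp.single_apply]
  · intro b _ hb
    simp [MonoidAlgebra.coeff_single, Finsupp.single_apply, hb]
  · simp

end Aux
section Aux2
open DihedralGroup MonoidAlgebra
set_option linter.unusedSectionVars false

variable {n : ℕ} [NeZero n]

/-- Explicit equiv used to split sums over the dihedral group. -/
def dEquiv : (ZMod n) ⊕ (ZMod n) ≃ DihedralGroup n where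
  toFun z := match z with | Sum.inl j => r j | Sum.inr j => sr j
  invFun g := match g with | r j => Sum.inl j | sr j => Sum.inr j
  left_inv := by rintro (x | x) <;> rfl
  right_inv := by rintro (x | x) <;> rfl

@[simp] lemma dEquiv_inl (j : ZMod n) : dEquiv (Sum.inl j) = r j := rfl
@[simp] lemma dEquiv_inr (j : ZMod n) : dEquiv (Sum.inr j) = sr j := rfl

lemma r_inv (i : ZMod n) : (r i)⁻¹ = r (-i) := rfl
lemma sr_inv (i : ZMod n) : (sr i)⁻¹ = sr i := rfl

lemma Mrot_mul_r (k : ZMod n) : Mrot n * MonoidAlgebra.single (r k) (1:ℤ) = Mrot n := by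
  rw [Mrot, Finset.sum_mul]
  simp only [MonoidAlgebra.single_mul_single, one_mul, r_mul_r]
  exact Equiv.sum_comp (Equiv.addRight k) (fun i => MonoidAlgebra.single (r i) (1:ℤ))

lemma Mrot_mul_sr (k : ZMod n) : Mrot n * MonoidAlgebra.single (sr k) (1:ℤ) = Mref n := by
  rw [Mrot, Mref, Finset.sum_mul]
  simp only [MonoidAlgebra.single_mul_single, one_mul, r_mul_sr]
  exact Equiv.sum_comp (Equiv.subLeft k) (fun i => MonoidAlgebra.single (sr i) (1:ℤ))

lemma Mref_mul_r (k : ZMod n) : Mref n * MonoidAlgebra.single (r k) (1:ℤ) = Mref n := by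
  rw [Mref, Finset.sum_mul]
  simp only [MonoidAlgebra.single_mul_single, one_mul, sr_mul_r]
  exact Equiv.sum_comp (Equiv.addRight k) (fun i => MonoidAlgebra.single (sr i) (1:ℤ))

lemma Mref_mul_sr (k : ZMod n) : Mref n * MonoidAlgebra.single (sr k) (1:ℤ) = Mrot n := by
  rw [Mref, Mrot, Finset.sum_mul]
  simp only [MonoidAlgebra.single_mul_single, one_mul, sr_mul_sr]
  exact Equiv.sum_comp (Equiv.subLeft k) (fun i => MonoidAlgebra.single (r i) (1:ℤ))

lemma y_mul_Mrot : YD n * Mrot n = Mref n := by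
  rw [YD_eq, Mrot, Mref, Finset.mul_sum]
  simp only [MonoidAlgebra.single_mul_single, one_mul, sr_mul_r, zero_add]

lemma Mrot_mul_x : Mrot n * XD n = Mrot n := Mrot_mul_r 1
lemma Mrot_mul_y : Mrot n * YD n = Mref n := Mrot_mul_sr 0
lemma Mref_mul_y : Mref n * YD n = Mrot n := Mref_mul_sr 0
lemma Mrot_mul_xy : Mrot n * (XD n * YD n) = Mref n := by
  rw [← mul_assoc, Mrot_mul_x, Mrot_mul_y]
lemma Mref_mul_xy : Mref n * (XD n * YD n) = Mrot n := by
  rw [← mul_assoc, XD_eq, Mref_mul_r 1, Mref_mul_y]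

lemma x_sub_one_mul_Mrot : (XD n - 1) * Mrot n = 0 := by
  rw [sub_mul, one_mul, sub_eq_zero, XD_eq, Mrot, Finset.mul_sum]
  simp only [MonoidAlgebra.single_mul_single, one_mul, r_mul_r]
  exact Equiv.sum_comp (Equiv.addLeft 1) (fun i => MonoidAlgebra.single (r i) (1:ℤ))

lemma Mrot_mul_x_sub_one : Mrot n * (XD n - 1) = 0 := by
  rw [mul_sub, mul_one, Mrot_mul_x, sub_self]

/-- The norm element is the sum of rotations and reflections. -/
lemma Nelt_eq : Nelt (DihedralGroup n) = Mrot n + Mref n := by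
  rw [Nelt]
  rw [← Fintype.sum_equiv dEquiv (fun z : ZMod n ⊕ ZMod n =>
      (MonoidAlgebra.of ℤ (DihedralGroup n)) (dEquiv z)) _ (fun z => rfl)]
  rw [Fintype.sum_sum_type]
  rfl

end Aux2
section Aux3
open DihedralGroup MonoidAlgebra
set_option linter.unusedSectionVars false
set_option linter.unusedTactic false

variable {n : ℕ} [NeZero n]

/-- Sum of rotation coefficients. -/
noncomputable def er (u : MonoidAlgebra ℤ (DihedralGroup n)) : ℤ := ∑ i : ZMod n, u.coeff (r i)
/-- Sum of reflection coefficients. -/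
noncomputable def es (u : MonoidAlgebra ℤ (DihedralGroup n)) : ℤ := ∑ i : ZMod n, u.coeff (sr i)

lemma er_add (u v : MonoidAlgebra ℤ (DihedralGroup n)) : er (u + v) = er u + er v := by
  unfold er; rw [← Finset.sum_add_distrib]
  exact Finset.sum_congr rfl fun i _ => Finsupp.add_apply u.coeff v.coeff (r i)
lemma es_add (u v : MonoidAlgebra ℤ (DihedralGroup n)) : es (u + v) = es u + es v := by
  unfold es; rw [← Finset.sum_add_distrib]
  exact Finset.sum_congr rfl fun i _ => Finsupp.add_apply u.coeff v.coeff (sr i)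
lemma er_neg (u : MonoidAlgebra ℤ (DihedralGroup n)) : er (-u) = - er u := by
  unfold er; rw [← Finset.sum_neg_distrib]
  exact Finset.sum_congr rfl fun i _ => Finsupp.neg_apply u.coeff (r i)
lemma es_neg (u : MonoidAlgebra ℤ (DihedralGroup n)) : es (-u) = - es u := by
  unfold es; rw [← Finset.sum_neg_distrib]
  exact Finset.sum_congr rfl fun i _ => Finsupp.neg_apply u.coeff (sr i)
lemma er_sub (u v : MonoidAlgebra ℤ (DihedralGroup n)) : er (u - v) = er u - er v := by
  unfold er; rw [← Finset.sum_sub_distrib]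
  exact Finset.sum_congr rfl fun i _ => Finsupp.sub_apply u.coeff v.coeff (r i)
lemma es_sub (u v : MonoidAlgebra ℤ (DihedralGroup n)) : es (u - v) = es u - es v := by
  unfold es; rw [← Finset.sum_sub_distrib]
  exact Finset.sum_congr rfl fun i _ => Finsupp.sub_apply u.coeff v.coeff (sr i)
lemma er_zero : er (0 : MonoidAlgebra ℤ (DihedralGroup n)) = 0 := by simp [er]
lemma es_zero : es (0 : MonoidAlgebra ℤ (DihedralGroup n)) = 0 := by simp [es]

lemma coeff_mul_single (u : MonoidAlgebra ℤ (DihedralGroup n)) (h g : DihedralGroup n) :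
    (u * MonoidAlgebra.single h (1:ℤ)).coeff g = u.coeff (g * h⁻¹) := by
  rw [MonoidAlgebra.coeff_mul_single_apply, mul_one]

lemma er_mul_r (u : MonoidAlgebra ℤ (DihedralGroup n)) (k : ZMod n) :
    er (u * MonoidAlgebra.single (r k) (1:ℤ)) = er u := by
  unfold er
  simp only [coeff_mul_single, r_inv, r_mul_r]
  exact Equiv.sum_comp (Equiv.addRight (-k)) (fun i => u.coeff (r i))

lemma es_mul_r (u : MonoidAlgebra ℤ (DihedralGroup n)) (k : ZMod n) :
    es (u * MonoidAlgebra.single (r k) (1:ℤ)) = es u := by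
  unfold es
  simp only [coeff_mul_single, r_inv, sr_mul_r]
  exact Equiv.sum_comp (Equiv.addRight (-k)) (fun i => u.coeff (sr i))

lemma er_mul_sr (u : MonoidAlgebra ℤ (DihedralGroup n)) (k : ZMod n) :
    er (u * MonoidAlgebra.single (sr k) (1:ℤ)) = es u := by
  unfold er es
  simp only [coeff_mul_single, sr_inv, r_mul_sr]
  exact Equiv.sum_comp (Equiv.subLeft k) (fun i => u.coeff (sr i))

lemma es_mul_sr (u : MonoidAlgebra ℤ (DihedralGroup n)) (k : ZMod n) :
    es (u * MonoidAlgebra.single (sr k) (1:ℤ)) = er u := by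
  unfold er es
  simp only [coeff_mul_single, sr_inv, sr_mul_sr]
  exact Equiv.sum_comp (Equiv.subLeft k) (fun i => u.coeff (r i))

lemma er_mul_x (u : MonoidAlgebra ℤ (DihedralGroup n)) : er (u * XD n) = er u := er_mul_r u 1
lemma es_mul_x (u : MonoidAlgebra ℤ (DihedralGroup n)) : es (u * XD n) = es u := es_mul_r u 1
lemma er_mul_y (u : MonoidAlgebra ℤ (DihedralGroup n)) : er (u * YD n) = es u := er_mul_sr u 0
lemma es_mul_y (u : MonoidAlgebra ℤ (DihedralGroup n)) : es (u * YD n) = er u := es_mul_sr u 0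
lemma er_mul_xy (u : MonoidAlgebra ℤ (DihedralGroup n)) : er (u * (XD n * YD n)) = es u := by
  rw [xy_eq, er_mul_sr]
lemma es_mul_xy (u : MonoidAlgebra ℤ (DihedralGroup n)) : es (u * (XD n * YD n)) = er u := by
  rw [xy_eq, es_mul_sr]

lemma er_mul_Mrot (u : MonoidAlgebra ℤ (DihedralGroup n)) : er (u * Mrot n) = n * er u := by
  rw [Mrot, Finset.mul_sum]
  rw [show er (∑ i : ZMod n, u * MonoidAlgebra.single (r i) (1:ℤ))
      = ∑ i : ZMod n, er (u * MonoidAlgebra.single (r i) (1:ℤ)) from ?_]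
  · simp only [er_mul_r, Finset.sum_const, Finset.card_univ, ZMod.card, smul_eq_mul]
    push_cast; ring
  · unfold er
    rw [Finset.sum_comm]
    congr 1; ext i
    rw [MonoidAlgebra.coeff_sum, Finsupp.finset_sum_apply]

lemma es_mul_Mrot (u : MonoidAlgebra ℤ (DihedralGroup n)) : es (u * Mrot n) = n * es u := by
  rw [Mrot, Finset.mul_sum]
  rw [show es (∑ i : ZMod n, u * MonoidAlgebra.single (r i) (1:ℤ))
      = ∑ i : ZMod n, es (u * MonoidAlgebra.single (r i) (1:ℤ)) from ?_]
  · simp only [es_mul_r, Finset.sum_const, Finset.card_univ, ZMod.card, smul_eq_mul]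
    push_cast; ring
  · unfold es
    rw [Finset.sum_comm]
    congr 1; ext i
    rw [MonoidAlgebra.coeff_sum, Finsupp.finset_sum_apply]

lemma er_single_r (i : ZMod n) (b : ℤ) : er (MonoidAlgebra.single (r i) b) = b := by
  unfold er
  rw [Finset.sum_eq_single i] <;>
    simp +contextual [MonoidAlgebra.coeff_single, Finsupp.single_apply, eq_comm]
lemma er_single_sr (i : ZMod n) (b : ℤ) : er (MonoidAlgebra.single (sr i) b) = 0 := by
  unfold er
  exact Finset.sum_eq_zero fun j _ => by simp [Finsupp.single_apply]
lemma es_single_r (i : ZMod n) (b : ℤ) : es (MonoidAlgebra.single (r i) b) = 0 := by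
  unfold es
  exact Finset.sum_eq_zero fun j _ => by simp [Finsupp.single_apply]
lemma es_single_sr (i : ZMod n) (b : ℤ) : es (MonoidAlgebra.single (sr i) b) = b := by
  unfold es
  rw [Finset.sum_eq_single i] <;>
    simp +contextual [MonoidAlgebra.coeff_single, Finsupp.single_apply, eq_comm]

lemma aug_eq_er_add_es (u : MonoidAlgebra ℤ (DihedralGroup n)) :
    aug (DihedralGroup n) u = er u + es u := by
  induction u using MonoidAlgebra.induction_linear with
  | zero => simp [er_zero, es_zero]
  | add f g hf hg => rw [map_add, er_add, es_add, hf, hg]; ring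
  | single g b =>
    have : aug (DihedralGroup n) (MonoidAlgebra.single g b) = b := by
      simp [aug, MonoidAlgebra.lift_single]
    rw [this]
    cases g with
    | r i => rw [er_single_r, es_single_r, add_zero]
    | sr i => rw [er_single_sr, es_single_sr, zero_add]

end Aux3
section Aux4
open DihedralGroup MonoidAlgebra
set_option linter.unusedSectionVars false

variable {n : ℕ} [NeZero n]

/-- Kernel of right multiplication by `x - 1`. -/
lemma kerX (u : MonoidAlgebra ℤ (DihedralGroup n)) (h : u * (XD n - 1) = 0) :
    u = u.coeff (r 0) • Mrot n + u.coeff (sr 0) • Mref n := by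
  have hx : u * XD n = u := by
    rwa [mul_sub, mul_one, sub_eq_zero] at h
  have key : ∀ g : DihedralGroup n, u.coeff (g * r (-1)) = u.coeff g := by
    intro g
    conv_rhs => rw [← hx]
    rw [XD_eq, coeff_mul_single, r_inv]
  have hr : ∀ k : ℕ, u.coeff (r (k : ZMod n)) = u.coeff (r 0) := by
    intro k
    induction k with
    | zero => norm_num
    | succ m ih =>
      have := key (r ((m+1 : ℕ) : ZMod n))
      rw [r_mul_r] at this
      rw [← this]
      push_cast
      rw [show ((m : ZMod n) + 1 + -1) = (m : ZMod n) by ring]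
      exact ih
  have hs : ∀ k : ℕ, u.coeff (sr (k : ZMod n)) = u.coeff (sr 0) := by
    intro k
    induction k with
    | zero => norm_num
    | succ m ih =>
      have := key (sr ((m+1 : ℕ) : ZMod n))
      rw [sr_mul_r] at this
      rw [← this]
      push_cast
      rw [show ((m : ZMod n) + 1 + -1) = (m : ZMod n) by ring]
      exact ih
  ext g
  rw [MonoidAlgebra.coeff_add, MonoidAlgebra.coeff_smul, MonoidAlgebra.coeff_smul,
    Finsupp.add_apply, Finsupp.smul_apply, Finsupp.smul_apply]
  cases g with
  | r i =>
    rw [Mrot_apply_r, Mref_apply_r, smul_eq_mul, smul_eq_mul, mul_one, mul_zero, add_zero]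
    rw [← ZMod.natCast_rightInverse i]
    exact hr i.val
  | sr i =>
    rw [Mrot_apply_sr, Mref_apply_sr, smul_eq_mul, smul_eq_mul, mul_one, mul_zero, zero_add]
    rw [← ZMod.natCast_rightInverse i]
    exact hs i.val

lemma partial_sum {v : ZMod n → ℤ} (hv : ∑ i : ZMod n, v i = 0) (i : ZMod n) :
    (∑ j ∈ Finset.range (i.val + 1), v (j : ZMod n))
      - (∑ j ∈ Finset.range ((i - 1).val + 1), v (j : ZMod n)) = v i := by
  rcases Nat.eq_zero_or_pos i.val with h0 | hpos
  · have hi : i = 0 := by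
      have := ZMod.natCast_rightInverse i
      rw [h0] at this; exact_mod_cast this.symm
    subst hi
    have hm1 : ((0 : ZMod n) - 1).val = n - 1 := by
      rw [zero_sub]
      rw [show (-1 : ZMod n) = ((n - 1 : ℕ) : ZMod n) by
        push_cast [Nat.cast_sub (Nat.one_le_iff_ne_zero.mpr (NeZero.ne n))]
        simp]
      exact ZMod.val_cast_of_lt (Nat.sub_lt (Nat.pos_of_ne_zero (NeZero.ne n)) one_pos)
    rw [hm1, h0, Nat.sub_add_cancel (Nat.one_le_iff_ne_zero.mpr (NeZero.ne n))]
    rw [sum_range_zmod v, hv, sub_zero]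
    simp
  · obtain ⟨k, hk⟩ : ∃ k, i.val = k + 1 := ⟨i.val - 1, (Nat.succ_pred_eq_of_pos hpos).symm⟩
    have hkn : k < n := by
      have := i.val_lt; omega
    have hi : i = ((k + 1 : ℕ) : ZMod n) := by
      rw [← hk]; exact (ZMod.natCast_rightInverse i).symm
    have him : (i - 1).val = k := by
      rw [hi]
      push_cast
      rw [show ((k : ZMod n) + 1 - 1) = (k : ZMod n) by ring]
      exact ZMod.val_cast_of_lt hkn
    rw [him, hk, Finset.sum_range_succ]
    rw [add_sub_cancel_left]
    rw [hi]

/-- Division by `x - 1` in the group ring. -/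
lemma divX (u : MonoidAlgebra ℤ (DihedralGroup n)) (h1 : er u = 0) (h2 : es u = 0) :
    ∃ w : MonoidAlgebra ℤ (DihedralGroup n), u = w * (XD n - 1) := by
  classical
  set F : DihedralGroup n → ℤ := fun g =>
    match g with
    | r i => -(∑ j ∈ Finset.range (i.val + 1), u.coeff (r (j : ZMod n)))
    | sr i => -(∑ j ∈ Finset.range (i.val + 1), u.coeff (sr (j : ZMod n))) with hF
  refine ⟨MonoidAlgebra.ofCoeff (Finsupp.equivFunOnFinite.symm F), ?_⟩
  set w : MonoidAlgebra ℤ (DihedralGroup n) := MonoidAlgebra.ofCoeff (Finsupp.equivFunOnFinite.symm F) with hw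
  have hwap : ∀ g, w.coeff g = F g := fun g => rfl
  ext g
  rw [mul_sub, mul_one, MonoidAlgebra.coeff_sub, Finsupp.sub_apply, XD_eq, coeff_mul_single, r_inv]
  cases g with
  | r i =>
    rw [r_mul_r, hwap, hwap]
    show u.coeff (r i) = F (r (i + -1)) - F (r i)
    have : (i + -1) = i - 1 := by ring
    rw [this, hF]
    simp only [neg_sub_neg]
    exact (partial_sum h1 i).symm
  | sr i =>
    rw [sr_mul_r, hwap, hwap]
    show u.coeff (sr i) = F (sr (i + -1)) - F (sr i)
    have : (i + -1) = i - 1 := by ring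
    rw [this, hF]
    simp only [neg_sub_neg]
    exact (partial_sum h2 i).symm

end Aux4
section Aux5
open DihedralGroup MonoidAlgebra
set_option linter.unusedSectionVars false
set_option linter.unusedTactic false

variable {n : ℕ} [NeZero n]

lemma one_eq_r0 : (1 : MonoidAlgebra ℤ (DihedralGroup n)) = MonoidAlgebra.single (r 0) 1 := by
  rw [MonoidAlgebra.one_def, one_def]

lemma yy : YD n * YD n = 1 := by
  rw [YD_eq, MonoidAlgebra.single_mul_single, one_mul, sr_mul_sr, sub_zero, ← one_eq_r0]

lemma xyx : XD n * YD n * XD n = YD n := by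
  rw [xy_eq, XD_eq, MonoidAlgebra.single_mul_single, one_mul, sr_mul_r, neg_add_cancel, YD_eq]

lemma xyxy : (XD n * YD n) * (XD n * YD n) = 1 := by
  rw [xy_eq, MonoidAlgebra.single_mul_single, one_mul, sr_mul_sr, sub_self, ← one_eq_r0]

lemma xyx' : XD n * (YD n * XD n) = YD n := by rw [← mul_assoc]; exact xyx
lemma xyxy' : XD n * (YD n * (XD n * YD n)) = 1 := by
  have h := xyxy (n := n)
  rw [mul_assoc] at h
  exact h

/-- The key identity `(x-1)(1+y) = (1-xy)(x-1)`. -/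
lemma key_id : (XD n - 1) * (1 + YD n) = (1 - XD n * YD n) * (XD n - 1) := by
  noncomm_ring
  rw [xyx']

lemma x_sub_one_mul_NxD : (XD n - 1) * NxD n = 0 := by
  rw [NxD_eq]; exact x_sub_one_mul_Mrot

lemma one_sub_xy_mul_one_add_xy :
    (1 - XD n * YD n) * (1 + XD n * YD n) = 0 := by
  noncomm_ring
  rw [xyxy']
  abel

lemma aug_single' (g : DihedralGroup n) (b : ℤ) :
    aug (DihedralGroup n) (MonoidAlgebra.single g b) = b := by
  simp [aug, MonoidAlgebra.lift_single]

/-- membership of `g - 1` in the span of `x-1, y-1, 2`. -/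
lemma gen_mem_span (g : DihedralGroup n) :
    MonoidAlgebra.single g (1:ℤ) - 1 ∈
      Ideal.span ({XD n - 1, YD n - 1, 2} : Set (MonoidAlgebra ℤ (DihedralGroup n))) := by
  set J := Ideal.span ({XD n - 1, YD n - 1, 2} : Set (MonoidAlgebra ℤ (DihedralGroup n))) with hJ
  have hxJ : XD n - 1 ∈ J := Ideal.subset_span (by simp)
  have hyJ : YD n - 1 ∈ J := Ideal.subset_span (by simp)
  have hr_mem : ∀ k : ℕ, MonoidAlgebra.single (r (k : ZMod n)) (1:ℤ) - 1 ∈ J := by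
    intro k
    induction k with
    | zero => rw [Nat.cast_zero, ← one_eq_r0, sub_self]; exact zero_mem J
    | succ m ih =>
      have heq : MonoidAlgebra.single (r ((m+1 : ℕ) : ZMod n)) (1:ℤ) - 1
          = MonoidAlgebra.single (r (m : ZMod n)) (1:ℤ) * (XD n - 1)
            + (MonoidAlgebra.single (r (m : ZMod n)) (1:ℤ) - 1) := by
        rw [mul_sub, mul_one, XD_eq, MonoidAlgebra.single_mul_single, one_mul, r_mul_r]
        push_cast
        abel
      rw [heq]
      exact add_mem (Ideal.mul_mem_left J _ hxJ) ih
  cases g with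
  | r i =>
    have := hr_mem i.val
    rwa [ZMod.natCast_rightInverse i] at this
  | sr i =>
    have heq : MonoidAlgebra.single (sr i) (1:ℤ) - 1
        = MonoidAlgebra.single (r (-i)) (1:ℤ) * (YD n - 1)
          + (MonoidAlgebra.single (r (-i)) (1:ℤ) - 1) := by
      rw [mul_sub, mul_one, YD_eq, MonoidAlgebra.single_mul_single, one_mul, r_mul_sr]
      rw [zero_sub, neg_neg]
      abel
    rw [heq]
    refine add_mem (Ideal.mul_mem_left J _ hyJ) ?_
    have := hr_mem (-i).val
    rwa [ZMod.natCast_rightInverse (-i)] at this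

/-- `(I,2)` is contained in the left ideal generated by `x-1`, `y-1`, `2`. -/
lemma I2_le_span (w : MonoidAlgebra ℤ (DihedralGroup n)) (hw : w ∈ I2 (DihedralGroup n)) :
    w ∈ Ideal.span ({XD n - 1, YD n - 1, 2} : Set (MonoidAlgebra ℤ (DihedralGroup n))) := by
  set J := Ideal.span ({XD n - 1, YD n - 1, 2} : Set (MonoidAlgebra ℤ (DihedralGroup n))) with hJ
  have h2J : (2 : MonoidAlgebra ℤ (DihedralGroup n)) ∈ J := Ideal.subset_span (by simp)
  have hdvd : (2:ℤ) ∣ aug (DihedralGroup n) w := by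
    have h0 : aug2 (DihedralGroup n) w = 0 := hw
    rw [aug2] at h0
    simp only [RingHom.comp_apply] at h0
    have h1 : ((aug (DihedralGroup n) w : ℤ) : ZMod 2) = 0 := h0
    rw [ZMod.intCast_zmod_eq_zero_iff_dvd] at h1
    exact_mod_cast h1
  obtain ⟨m, hm⟩ := hdvd
  have haug : aug (DihedralGroup n) w = ∑ g ∈ w.coeff.support, w.coeff g := by
    conv_lhs => rw [← MonoidAlgebra.sum_coeff_single w]
    rw [Finsupp.sum, map_sum]
    exact Finset.sum_congr rfl fun g _ => aug_single' g (w.coeff g)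
  have hrep : w = (∑ g ∈ w.coeff.support, (w.coeff g) • (MonoidAlgebra.single g (1:ℤ) - 1))
      + (aug (DihedralGroup n) w) • 1 := by
    rw [haug, Finset.sum_smul]
    rw [← Finset.sum_add_distrib]
    conv_lhs => rw [← MonoidAlgebra.sum_coeff_single w, Finsupp.sum]
    refine Finset.sum_congr rfl fun g _ => ?_
    rw [smul_sub, sub_add_cancel, MonoidAlgebra.smul_single', mul_one]
  rw [hrep]
  refine add_mem (Submodule.sum_mem J fun g _ => ?_) ?_
  · have heq : (w.coeff g) • (MonoidAlgebra.single g (1:ℤ) - 1)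
        = ((w.coeff g) • (1 : MonoidAlgebra ℤ (DihedralGroup n)))
          * (MonoidAlgebra.single g (1:ℤ) - 1) := by
      rw [smul_mul_assoc, one_mul]
    rw [heq]
    exact Ideal.mul_mem_left J _ (gen_mem_span g)
  · rw [hm]
    have heq : ((2 * m : ℤ)) • (1 : MonoidAlgebra ℤ (DihedralGroup n))
        = (m • (1 : MonoidAlgebra ℤ (DihedralGroup n))) * 2 := by
      rw [mul_comm (2:ℤ) m, mul_smul, smul_mul_assoc, one_mul]
      congr 1
      rw [zsmul_eq_mul]
      norm_num
    rw [heq]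
    exact Ideal.mul_mem_left J _ h2J

end Aux5
section Aux6
open DihedralGroup MonoidAlgebra
set_option linter.unusedSectionVars false
set_option linter.unusedTactic false

variable {n : ℕ} [NeZero n]

lemma x_sub_one_mul_Mref : (XD n - 1) * Mref n = 0 := by
  rw [sub_mul, one_mul, sub_eq_zero, XD_eq, Mref, Finset.mul_sum]
  simp only [MonoidAlgebra.single_mul_single, one_mul, r_mul_sr]
  exact Equiv.sum_comp (Equiv.subRight 1) (fun i => MonoidAlgebra.single (sr i) (1:ℤ))

lemma one_add_y_mul_Mrot : (1 + YD n) * Mrot n = Mrot n + Mref n := by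
  rw [add_mul, one_mul, y_mul_Mrot]

lemma Mrot_mul_one_add_xy : Mrot n * (1 + XD n * YD n) = Mrot n + Mref n := by
  rw [mul_add, mul_one, Mrot_mul_xy]

lemma Mrot_mul_one_sub_xy : Mrot n * (1 - XD n * YD n) = Mrot n - Mref n := by
  rw [mul_sub, mul_one, Mrot_mul_xy]

lemma Mref_mul_one_sub_xy : Mref n * (1 - XD n * YD n) = Mref n - Mrot n := by
  rw [mul_sub, mul_one, Mref_mul_xy]

lemma Nelt_mul_x_sub_one : Nelt (DihedralGroup n) * (XD n - 1) = 0 := by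
  rw [Nelt_eq, mul_sub, mul_one, add_mul, Mrot_mul_x, XD_eq, Mref_mul_r, sub_self]

lemma Nelt_mul_one_sub_xy : Nelt (DihedralGroup n) * (1 - XD n * YD n) = 0 := by
  rw [Nelt_eq, add_mul, Mrot_mul_one_sub_xy, Mref_mul_one_sub_xy]
  abel

lemma coeff_eq_of_eq {u v : MonoidAlgebra ℤ (DihedralGroup n)} (h : u = v)
    (g : DihedralGroup n) : u.coeff g = v.coeff g := by rw [h]

end Aux6
section Aux7
open DihedralGroup MonoidAlgebra
set_option linter.unusedSectionVars false
set_option linter.unusedTactic false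

variable {n : ℕ} [NeZero n]

lemma pair_eq_zero {α β : Type*} [Zero α] [Zero β] {a : α} {b : β} :
    (a, b) = 0 ↔ a = 0 ∧ b = 0 := by
  simp [Prod.ext_iff]

lemma mem_I2_of_even (u : MonoidAlgebra ℤ (DihedralGroup n)) (t : ℤ)
    (h : er u + es u = 2 * t) : u ∈ I2 (DihedralGroup n) := by
  show aug2 (DihedralGroup n) u = 0
  rw [aug2, RingHom.comp_apply]
  show ((aug (DihedralGroup n) u : ℤ) : ZMod 2) = 0
  rw [aug_eq_er_add_es, h]
  exact (ZMod.intCast_zmod_eq_zero_iff_dvd _ 2).mpr ⟨t, by push_cast; ring⟩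

/-- Shared consequence of the kernel equations. -/
lemma eqns_consequences (a b c : MonoidAlgebra ℤ (DihedralGroup n))
    (h1 : a * NxD n + b * (1 + XD n * YD n) = 0)
    (h2 : -(a * (1 + YD n)) + b * (XD n - 1) + c * (YD n + 1) = 0) :
    er a = es a ∧ er c + es c = er a + es a := by
  rw [NxD_eq, mul_add, mul_one] at h1
  rw [mul_add, mul_one, mul_sub, mul_one, mul_add, mul_one] at h2
  have e1 := congrArg er h1
  rw [er_add, er_add, er_mul_Mrot, er_mul_xy, er_zero] at e1
  have e2 := congrArg es h1
  rw [es_add, es_add, es_mul_Mrot, es_mul_xy, es_zero] at e2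
  have e3 := congrArg er h2
  rw [er_add, er_add, er_neg, er_add, er_sub, er_add, er_mul_y, er_mul_x, er_zero, er_mul_y] at e3
  have hne : (n : ℤ) ≠ 0 := Int.natCast_ne_zero.mpr (NeZero.ne n)
  have hra : er a = es a := by
    have h4 : (n : ℤ) * (er a - es a) = 0 := by linarith
    rcases mul_eq_zero.mp h4 with h | h
    · exact absurd h hne
    · linarith
  exact ⟨hra, by linarith⟩

end Aux7
section Aux8
open DihedralGroup MonoidAlgebra
set_option linter.unusedSectionVars false
set_option linter.unusedTactic false

variable {n : ℕ} [NeZero n]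

lemma part1 (v : MonoidAlgebra ℤ (DihedralGroup n)) :
    (v * (XD n - 1) * NxD n + v * (1 - XD n * YD n) * (1 + XD n * YD n),
      -(v * (XD n - 1) * (1 + YD n)) + v * (1 - XD n * YD n) * (XD n - 1) +
        0 * (YD n + 1)) = 0 := by
  rw [pair_eq_zero]
  constructor
  · rw [mul_assoc, mul_assoc, x_sub_one_mul_NxD, one_sub_xy_mul_one_add_xy, mul_zero,
      add_zero]
  · rw [zero_mul, add_zero, mul_assoc, mul_assoc, key_id, neg_add_cancel]

lemma part2 (v : MonoidAlgebra ℤ (DihedralGroup n)) :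
    (v * (XD n - 1), v * (1 - XD n * YD n), (0 : MonoidAlgebra ℤ (DihedralGroup n))) = 0 ↔
      v ∈ NIdeal (DihedralGroup n) := by
  rw [pair_eq_zero, pair_eq_zero]
  constructor
  · rintro ⟨hx, hxy, -⟩
    have hv := kerX v hx
    have hcomp : v * (1 - XD n * YD n)
        = (v.coeff (r 0) - v.coeff (sr 0)) • Mrot n + (v.coeff (sr 0) - v.coeff (r 0)) • Mref n := by
      conv_lhs => rw [hv]
      rw [add_mul, smul_mul_assoc, smul_mul_assoc, Mrot_mul_one_sub_xy, Mref_mul_one_sub_xy]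
      rw [smul_sub, smul_sub]
      module
    rw [hcomp] at hxy
    have h0 := coeff_eq_of_eq hxy (r 0)
    rw [MonoidAlgebra.coeff_add, MonoidAlgebra.coeff_smul, MonoidAlgebra.coeff_smul,
        MonoidAlgebra.coeff_zero,
        Finsupp.add_apply, Finsupp.smul_apply, Finsupp.smul_apply, Mrot_apply_r, Mref_apply_r,
      Finsupp.zero_apply, smul_eq_mul, smul_eq_mul, mul_one, mul_zero, add_zero] at h0
    have hpq : v.coeff (r 0) = v.coeff (sr 0) := by linarith [sub_eq_zero.mp h0]
    rw [NIdeal]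
    refine Submodule.mem_span_singleton.mpr ⟨(v.coeff (r 0)) • 1, ?_⟩
    rw [smul_eq_mul, smul_mul_assoc, one_mul, Nelt_eq, smul_add]
    conv_rhs => rw [hv]
    rw [hpq]
  · intro hv
    obtain ⟨u, hu⟩ := Submodule.mem_span_singleton.mp hv
    rw [smul_eq_mul] at hu
    subst hu
    refine ⟨?_, ?_, rfl⟩
    · rw [mul_assoc, Nelt_mul_x_sub_one, mul_zero]
    · rw [mul_assoc, Nelt_mul_one_sub_xy, mul_zero]

lemma part3 (a b c : MonoidAlgebra ℤ (DihedralGroup n))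
    (h : (a * NxD n + b * (1 + XD n * YD n),
      -(a * (1 + YD n)) + b * (XD n - 1) + c * (YD n + 1)) = 0) :
    c ∈ I2 (DihedralGroup n) := by
  rw [pair_eq_zero] at h
  obtain ⟨h1, h2⟩ := h
  obtain ⟨hra, hc⟩ := eqns_consequences a b c h1 h2
  exact mem_I2_of_even c (er a) (by linarith)

end Aux8
section Aux9
open DihedralGroup MonoidAlgebra
set_option linter.unusedSectionVars false
set_option linter.unusedTactic false

variable {n : ℕ} [NeZero n]

lemma part4 (a b c : MonoidAlgebra ℤ (DihedralGroup n))
    (h : (a * NxD n + b * (1 + XD n * YD n),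
      -(a * (1 + YD n)) + b * (XD n - 1) + c * (YD n + 1)) = 0) :
    c = 0 ↔ ∃ v : MonoidAlgebra ℤ (DihedralGroup n),
      (a, b, c) = (v * (XD n - 1), v * (1 - XD n * YD n), 0) := by
  constructor
  · intro hc
    subst hc
    rw [pair_eq_zero] at h
    obtain ⟨h1, h2⟩ := h
    obtain ⟨hra, hc0⟩ := eqns_consequences a b 0 h1 h2
    rw [er_zero, es_zero] at hc0
    have hera : er a = 0 := by linarith
    have hesa : es a = 0 := by linarith
    obtain ⟨v', hv'⟩ := divX a hera hesa
    -- b * (x-1) = a * (1+y)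
    have hb : b * (XD n - 1) = a * (1 + YD n) := by
      rw [zero_mul, add_zero] at h2
      linear_combination (norm := abel) h2
    -- u := b - v' * (1 - xy) is killed by (x - 1)
    set u := b - v' * (1 - XD n * YD n) with hu
    have hukill : u * (XD n - 1) = 0 := by
      rw [hu, sub_mul, hb, hv', mul_assoc, mul_assoc, ← key_id, sub_self]
    have hker := kerX u hukill
    set p := u.coeff (r 0) with hp
    set q := u.coeff (sr 0) with hq
    -- from the first equation, u * (1 + xy) = 0
    have haN : a * NxD n = 0 := by
      rw [hv', mul_assoc, x_sub_one_mul_NxD, mul_zero]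
    have hbxy : b * (1 + XD n * YD n) = 0 := by
      rw [haN, zero_add] at h1; exact h1
    have huxy : u * (1 + XD n * YD n) = 0 := by
      rw [hu, sub_mul, hbxy, mul_assoc, one_sub_xy_mul_one_add_xy, mul_zero, sub_self]
    have huexp : u * (1 + XD n * YD n) = (p + q) • (Mrot n + Mref n) := by
      conv_lhs => rw [hker]
      rw [add_mul, smul_mul_assoc, smul_mul_assoc, Mrot_mul_one_add_xy]
      rw [mul_add, mul_one, Mref_mul_xy]
      module
    rw [huxy] at huexp
    have h0 := coeff_eq_of_eq huexp.symm (r 0)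
    rw [MonoidAlgebra.coeff_zero, MonoidAlgebra.coeff_smul, MonoidAlgebra.coeff_add,
        Finsupp.smul_apply, Finsupp.add_apply, Mrot_apply_r, Mref_apply_r,
      Finsupp.zero_apply, smul_eq_mul] at h0
    have hqp : q = -p := by linarith
    refine ⟨v' + p • Mrot n, ?_⟩
    rw [Prod.ext_iff, Prod.ext_iff]
    refine ⟨?_, ?_, rfl⟩
    · show a = (v' + p • Mrot n) * (XD n - 1)
      rw [add_mul, smul_mul_assoc, Mrot_mul_x_sub_one, smul_zero, add_zero, hv']
    · show b = (v' + p • Mrot n) * (1 - XD n * YD n)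
      rw [add_mul, smul_mul_assoc, Mrot_mul_one_sub_xy]
      have hbu : b = u + v' * (1 - XD n * YD n) := by rw [hu]; abel
      rw [hbu]
      conv_lhs => rw [hker]
      rw [hqp]
      module
  · rintro ⟨v, hv⟩
    have := congrArg (fun t : MonoidAlgebra ℤ (DihedralGroup n) ×
      MonoidAlgebra ℤ (DihedralGroup n) × MonoidAlgebra ℤ (DihedralGroup n) => t.2.2) hv
    exact this

end Aux9
section Aux10
open DihedralGroup MonoidAlgebra
set_option linter.unusedSectionVars false
set_option linter.unusedTactic false

variable {n : ℕ} [NeZero n]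

/-- Solvability predicate for surjectivity. -/
def Sol (w : MonoidAlgebra ℤ (DihedralGroup n)) : Prop :=
  ∃ a b : MonoidAlgebra ℤ (DihedralGroup n),
    (a * NxD n + b * (1 + XD n * YD n),
      -(a * (1 + YD n)) + b * (XD n - 1) + w * (YD n + 1)) = 0

lemma one_add_y_sq : (1 + YD n) * (1 + YD n) = 2 + 2 * YD n := by
  rw [add_mul, one_mul, mul_add, mul_one, yy]
  noncomm_ring
  try simp
  try abel

lemma sol_x : Sol (XD n - 1) := by
  refine ⟨(XD n - 1) * (1 + YD n), 1 - XD n * YD n, ?_⟩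
  rw [pair_eq_zero]
  constructor
  · rw [one_sub_xy_mul_one_add_xy, add_zero, mul_assoc, NxD_eq]
    rw [one_add_y_mul_Mrot, mul_add, x_sub_one_mul_Mrot, x_sub_one_mul_Mref, add_zero]
  · rw [← key_id]
    have expand : -((XD n - 1) * (1 + YD n) * (1 + YD n)) + (XD n - 1) * (1 + YD n)
          + (XD n - 1) * (YD n + 1)
        = -((XD n - 1) * ((1 + YD n) * (1 + YD n))) + (XD n - 1) * (2 + 2 * YD n) := by
      noncomm_ring
    rw [expand, one_add_y_sq, neg_add_cancel]

lemma sol_y : Sol (YD n - 1) := by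
  refine ⟨0, 0, ?_⟩
  rw [pair_eq_zero]
  constructor
  · rw [zero_mul, zero_mul, add_zero]
  · rw [zero_mul, zero_mul, neg_zero, zero_add, zero_add]
    have expand : (YD n - 1) * (YD n + 1) = YD n * YD n - 1 := by noncomm_ring
    rw [expand, yy, sub_self]

lemma sol_two : Sol (2 : MonoidAlgebra ℤ (DihedralGroup n)) := by
  refine ⟨1 + YD n, -NxD n, ?_⟩
  rw [pair_eq_zero]
  constructor
  · rw [NxD_eq, one_add_y_mul_Mrot, neg_mul, Mrot_mul_one_add_xy, add_neg_cancel]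
  · rw [one_add_y_sq, neg_mul, NxD_eq, Mrot_mul_x_sub_one, neg_zero, add_zero]
    have expand : -(2 + 2 * YD n) + 2 * (YD n + 1)
        = (0 : MonoidAlgebra ℤ (DihedralGroup n)) := by
      noncomm_ring
      try simp
      try abel
    rw [expand]

lemma sol_zero : Sol (0 : MonoidAlgebra ℤ (DihedralGroup n)) := by
  refine ⟨0, 0, ?_⟩
  rw [pair_eq_zero]
  constructor
  · rw [zero_mul, zero_mul, add_zero]
  · rw [zero_mul, zero_mul, zero_mul, neg_zero, zero_add, zero_add]

lemma sol_add {w1 w2 : MonoidAlgebra ℤ (DihedralGroup n)} (s1 : Sol w1) (s2 : Sol w2) :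
    Sol (w1 + w2) := by
  obtain ⟨a1, b1, h1⟩ := s1
  obtain ⟨a2, b2, h2⟩ := s2
  rw [pair_eq_zero] at h1 h2
  refine ⟨a1 + a2, b1 + b2, ?_⟩
  rw [pair_eq_zero]
  constructor
  · have expand : (a1 + a2) * NxD n + (b1 + b2) * (1 + XD n * YD n)
        = (a1 * NxD n + b1 * (1 + XD n * YD n)) + (a2 * NxD n + b2 * (1 + XD n * YD n)) := by
      noncomm_ring
    rw [expand, h1.1, h2.1, add_zero]
  · have expand : -((a1 + a2) * (1 + YD n)) + (b1 + b2) * (XD n - 1) + (w1 + w2) * (YD n + 1)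
        = (-(a1 * (1 + YD n)) + b1 * (XD n - 1) + w1 * (YD n + 1))
          + (-(a2 * (1 + YD n)) + b2 * (XD n - 1) + w2 * (YD n + 1)) := by
      noncomm_ring
    rw [expand, h1.2, h2.2, add_zero]

lemma sol_smul (u : MonoidAlgebra ℤ (DihedralGroup n)) {w : MonoidAlgebra ℤ (DihedralGroup n)}
    (s : Sol w) : Sol (u * w) := by
  obtain ⟨a, b, h⟩ := s
  rw [pair_eq_zero] at h
  refine ⟨u * a, u * b, ?_⟩
  rw [pair_eq_zero]
  constructor
  · have expand : (u * a) * NxD n + (u * b) * (1 + XD n * YD n)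
        = u * (a * NxD n + b * (1 + XD n * YD n)) := by noncomm_ring
    rw [expand, h.1, mul_zero]
  · have expand : -((u * a) * (1 + YD n)) + (u * b) * (XD n - 1) + (u * w) * (YD n + 1)
        = u * (-(a * (1 + YD n)) + b * (XD n - 1) + w * (YD n + 1)) := by noncomm_ring
    rw [expand, h.2, mul_zero]

lemma part5 (w : MonoidAlgebra ℤ (DihedralGroup n)) (hw : w ∈ I2 (DihedralGroup n)) :
    Sol w := by
  have hspan := I2_le_span w hw
  refine Submodule.span_induction ?_ sol_zero (fun x y _ _ hx hy => sol_add hx hy)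
    (fun u x _ hx => sol_smul u hx) hspan
  intro x hx
  rcases hx with h | h | h
  · rw [h]; exact sol_x
  · rw [h]; exact sol_y
  · rw [h]; exact sol_two

end Aux10
/-- For `π = D_{2n}` with presentation `⟨x, y | xⁿy⁻², xyxy⁻¹, y²⟩` and
`d₂ : ℤπ³ → ℤπ²` right multiplication by the matrix with rows `(N_x, -(1+y))`, `(1+xy, x-1)`,
`(0, y+1)`, there is a short exact sequence of `ℤπ`-modules
`0 → ℤπ/N → ker(d₂) → (I,2) → 0`, where the first map sends `1` to `(x-1, 1-xy, 0)` and the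
second sends `(a,b,c)` to `c`.  This is stated elementwise below, writing
`d₂(a,b,c) = (aN_x + b(1+xy), -a(1+y) + b(x-1) + c(y+1))`. -/
theorem stmt15 (n : ℕ) [NeZero n] :
    -- the image of ℤπ/N lies in ker d₂
    (∀ v : MonoidAlgebra ℤ (DihedralGroup n),
      (v * (XD n - 1) * NxD n + v * (1 - XD n * YD n) * (1 + XD n * YD n),
        -(v * (XD n - 1) * (1 + YD n)) + v * (1 - XD n * YD n) * (XD n - 1) +
          0 * (YD n + 1)) = 0) ∧
    -- the induced map ℤπ/N → ker d₂ is injective: v maps to 0 iff v ∈ (N)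
    (∀ v : MonoidAlgebra ℤ (DihedralGroup n),
      (v * (XD n - 1), v * (1 - XD n * YD n), (0 : MonoidAlgebra ℤ (DihedralGroup n))) = 0 ↔
        v ∈ NIdeal (DihedralGroup n)) ∧
    -- the second map sends ker d₂ into (I,2)
    (∀ a b c : MonoidAlgebra ℤ (DihedralGroup n),
      (a * NxD n + b * (1 + XD n * YD n),
        -(a * (1 + YD n)) + b * (XD n - 1) + c * (YD n + 1)) = 0 →
      c ∈ I2 (DihedralGroup n)) ∧
    -- exactness at ker d₂
    (∀ a b c : MonoidAlgebra ℤ (DihedralGroup n),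
      (a * NxD n + b * (1 + XD n * YD n),
        -(a * (1 + YD n)) + b * (XD n - 1) + c * (YD n + 1)) = 0 →
      (c = 0 ↔ ∃ v : MonoidAlgebra ℤ (DihedralGroup n),
        (a, b, c) = (v * (XD n - 1), v * (1 - XD n * YD n), 0))) ∧
    -- surjectivity of ker d₂ → (I,2)
    (∀ w ∈ I2 (DihedralGroup n),
      ∃ a b : MonoidAlgebra ℤ (DihedralGroup n),
        (a * NxD n + b * (1 + XD n * YD n),
          -(a * (1 + YD n)) + b * (XD n - 1) + w * (YD n + 1)) = 0) := by
  refine ⟨part1, part2, part3, part4, fun w hw => part5 w hw⟩
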